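/- arXiv:1304.2699 — 2 statements merged into one kernel-verified Lean document; each statement's English description precedes it below -/
import Mathlib

section
/- For every r ∈ ℕ, the arithmetic function ρ_r, where ρ_r(n) is the number of ordered r-tuples (k_1,…,k_r) ∈ {1,…,n}^r such that gcd(k_1,…,k_r) is regular (mod n), is multiplicative, and for every prime power p^ν (ν ∈ ℕ, ν ≥ 1) one has ρ_r(p^ν) = p^{rν} − p^{r(ν−1)} + 1. -/
open Finset
open scoped Classical

/-- `k` is regular (mod `n`): there is an integer `x` with `k² x ≡ k (mod n)`. -/
def IsRegularMod (k n : ℕ) : Prop := ∃ x : ℤ, (n : ℤ) ∣ (k : ℤ) ^ 2 * x - (k : ℤ)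

lemma isReg_iff_dvd (k n : ℕ) : IsRegularMod k n ↔ Nat.gcd (k ^ 2) n ∣ k := by
  constructor
  · rintro ⟨x, hx⟩
    have h1 : (Nat.gcd (k ^ 2) n : ℤ) ∣ (k : ℤ) ^ 2 * x :=
      Dvd.dvd.mul_right (by exact_mod_cast Int.natCast_dvd_natCast.mpr (Nat.gcd_dvd_left (k^2) n)) x
    have h2 : (Nat.gcd (k ^ 2) n : ℤ) ∣ (k : ℤ) ^ 2 * x - k :=
      dvd_trans (Int.natCast_dvd_natCast.mpr (Nat.gcd_dvd_right (k^2) n)) hx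
    have h3 : (Nat.gcd (k ^ 2) n : ℤ) ∣ (k : ℤ) := by
      have := dvd_sub h1 h2
      simpa using this
    exact_mod_cast h3
  · rintro ⟨c, hc⟩
    refine ⟨Int.gcdA ((k:ℤ)^2) (n:ℤ) * c, ?_⟩
    have hb := Int.gcd_eq_gcd_ab ((k:ℤ)^2) (n:ℤ)
    have hg : (Int.gcd ((k:ℤ)^2) (n:ℤ) : ℤ) = (Nat.gcd (k^2) n : ℤ) := by
      norm_cast
    rw [hg] at hb
    have hkc : (k:ℤ) = (Nat.gcd (k^2) n : ℤ) * c := by exact_mod_cast hc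
    refine ⟨c * (- Int.gcdB ((k:ℤ)^2) (n:ℤ)), ?_⟩
    linear_combination (-(c:ℤ)) * hb - hkc

lemma gcd_sq_eq (k n : ℕ) (hn : 0 < n) : Nat.gcd (k^2) (n^2) = (Nat.gcd k n)^2 := by
  set g := Nat.gcd k n with hg
  have hd : 0 < g := Nat.gcd_pos_of_pos_right k hn
  obtain ⟨a, ha⟩ : g ∣ k := Nat.gcd_dvd_left k n
  obtain ⟨b, hb⟩ : g ∣ n := Nat.gcd_dvd_right k n
  have hco : Nat.Coprime a b := by
    have h := Nat.coprime_div_gcd_div_gcd hd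
    rwa [show k / g = a by rw [ha]; exact Nat.mul_div_cancel_left _ hd,
      show n / g = b by rw [hb]; exact Nat.mul_div_cancel_left _ hd] at h
  have hco2 : Nat.Coprime (a^2) (b^2) := Nat.Coprime.pow 2 2 hco
  calc Nat.gcd (k^2) (n^2) = Nat.gcd (g^2 * a^2) (g^2 * b^2) := by
        rw [ha, hb]; ring_nf
    _ = g^2 * Nat.gcd (a^2) (b^2) := Nat.gcd_mul_left _ _ _
    _ = g^2 := by rw [hco2, mul_one]

lemma isReg_iff_gcd (k n : ℕ) (hn : 0 < n) :
    IsRegularMod k n ↔ Nat.gcd ((Nat.gcd k n)^2) n ∣ Nat.gcd k n := by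
  rw [isReg_iff_dvd]
  constructor
  · intro h
    have h1 : Nat.gcd ((Nat.gcd k n)^2) n ∣ Nat.gcd (k^2) n :=
      Nat.dvd_gcd ((Nat.gcd_dvd_left _ _).trans (pow_dvd_pow_of_dvd (Nat.gcd_dvd_left k n) 2))
        (Nat.gcd_dvd_right _ _)
    exact Nat.dvd_gcd (h1.trans h) (Nat.gcd_dvd_right _ _)
  · intro h
    have h2 : Nat.gcd (k^2) n ∣ (Nat.gcd k n)^2 := by
      rw [← gcd_sq_eq k n hn]
      exact Nat.dvd_gcd (Nat.gcd_dvd_left _ _)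
        ((Nat.gcd_dvd_right _ _).trans (dvd_pow_self n two_ne_zero))
    have h3 : Nat.gcd (k^2) n ∣ Nat.gcd ((Nat.gcd k n)^2) n :=
      Nat.dvd_gcd h2 (Nat.gcd_dvd_right _ _)
    exact (h3.trans h).trans (Nat.gcd_dvd_left k n)

lemma isReg_congr {k k' n : ℕ} (hn : 0 < n) (h : Nat.gcd k n = Nat.gcd k' n) :
    IsRegularMod k n ↔ IsRegularMod k' n := by
  rw [isReg_iff_gcd k n hn, isReg_iff_gcd k' n hn, h]

lemma gcd_finset_gcd {ι : Type*} (s : Finset ι) (t : ι → ℕ) (n : ℕ) :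
    Nat.gcd (s.gcd t) n = Nat.gcd (s.gcd fun i => Nat.gcd (t i) n) n := by
  apply Nat.dvd_antisymm
  · exact Nat.dvd_gcd (Finset.dvd_gcd fun i hi =>
      Nat.dvd_gcd ((Nat.gcd_dvd_left _ _).trans (Finset.gcd_dvd hi)) (Nat.gcd_dvd_right _ _))
      (Nat.gcd_dvd_right _ _)
  · exact Nat.dvd_gcd (Finset.dvd_gcd fun i hi =>
      ((Nat.gcd_dvd_left _ _).trans (Finset.gcd_dvd hi)).trans (Nat.gcd_dvd_left (t i) n))
      (Nat.gcd_dvd_right _ _)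

lemma pred_congr {r n : ℕ} (hn : 0 < n) (t s : Fin r → ℕ)
    (h : ∀ i, t i % n = s i % n) :
    IsRegularMod (Finset.univ.gcd t) n ↔ IsRegularMod (Finset.univ.gcd s) n := by
  apply isReg_congr hn
  rw [gcd_finset_gcd Finset.univ t n, gcd_finset_gcd Finset.univ s n]
  congr 1
  apply Finset.gcd_congr rfl
  intro i _
  conv_lhs => rw [Nat.gcd_comm, Nat.gcd_rec]
  conv_rhs => rw [Nat.gcd_comm, Nat.gcd_rec]
  rw [h i]

lemma isReg_mul {k m n : ℕ} (h : Nat.Coprime m n) :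
    IsRegularMod k (m * n) ↔ IsRegularMod k m ∧ IsRegularMod k n := by
  constructor
  · rintro ⟨x, hx⟩
    push_cast at hx
    exact ⟨⟨x, (dvd_mul_right (m:ℤ) (n:ℤ)).trans hx⟩,
      ⟨x, (dvd_mul_left (n:ℤ) (m:ℤ)).trans hx⟩⟩
  · rintro ⟨⟨x, hx⟩, ⟨y, hy⟩⟩
    obtain ⟨c, hc⟩ := hx
    obtain ⟨d, hd⟩ := hy
    have hb := Int.gcd_eq_gcd_ab (m:ℤ) (n:ℤ)
    rw [Int.gcd_natCast_natCast, h, Nat.cast_one] at hb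
    set A := Int.gcdA (m:ℤ) (n:ℤ)
    set B := Int.gcdB (m:ℤ) (n:ℤ)
    refine ⟨x * ((n:ℤ) * B) + y * ((m:ℤ) * A), ?_⟩
    push_cast
    refine ⟨B * c + A * d, ?_⟩
    linear_combination ((n:ℤ) * B) * hc + ((m:ℤ) * A) * hd - (k:ℤ) * hb

lemma isReg_prime_pow {p ν k : ℕ} (hp : p.Prime) (hν : 1 ≤ ν) :
    IsRegularMod k (p ^ ν) ↔ (¬ p ∣ k ∨ p ^ ν ∣ k) := by
  rcases eq_or_ne k 0 with rfl | hk
  · simp only [Nat.cast_zero, ne_eq, zero_pow, two_ne_zero, not_false_iff, zero_mul, sub_zero,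
      dvd_zero, or_true, iff_true]
    exact ⟨0, by simp⟩
  rw [isReg_iff_dvd]
  constructor
  · intro h
    by_contra hcon
    push_neg at hcon
    obtain ⟨hpk, hpν⟩ := hcon
    set a := k.factorization p with ha
    have h1 : 1 ≤ a := by
      rw [ha]
      exact (Nat.Prime.pow_dvd_iff_le_factorization hp hk).mp (by simpa using hpk)
    have h2 : a < ν := by
      by_contra hle
      push_neg at hle
      exact hpν ((Nat.Prime.pow_dvd_iff_le_factorization hp hk).mpr hle)
    have hpa : p ^ a ∣ k := Nat.ordProj_dvd k p
    have h3 : p ^ (a+1) ∣ k ^ 2 := by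
      calc p ^ (a+1) ∣ p ^ (2*a) := pow_dvd_pow p (by omega)
        _ = (p ^ a) ^ 2 := by ring
        _ ∣ k ^ 2 := pow_dvd_pow_of_dvd hpa 2
    have h4 : p ^ (a+1) ∣ p ^ ν := pow_dvd_pow p (by omega)
    have h5 : p ^ (a+1) ∣ k := (Nat.dvd_gcd h3 h4).trans h
    have h6 : a + 1 ≤ a := (Nat.Prime.pow_dvd_iff_le_factorization hp hk).mp h5
    omega
  · rintro (h | h)
    · have hco : Nat.Coprime (k ^ 2) (p ^ ν) :=
        Nat.Coprime.pow 2 ν ((hp.coprime_iff_not_dvd.mpr h).symm)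
      rw [hco]
      exact one_dvd k
    · exact (Nat.gcd_dvd_right _ _).trans h

def red (M x : ℕ) : ℕ := if x % M = 0 then M else x % M

lemma red_mem {M : ℕ} (hM : 0 < M) (x : ℕ) : red M x ∈ Finset.Icc 1 M := by
  unfold red
  have := Nat.mod_lt x hM
  split <;> simp only [Finset.mem_Icc] <;> omega

lemma red_modEq (M x : ℕ) : red M x ≡ x [MOD M] := by
  show red M x % M = x % M
  unfold red
  split <;> simp_all [Nat.mod_mod_of_dvd, Nat.mod_self]

lemma red_eq_of {M x y : ℕ} (hy : y ∈ Finset.Icc 1 M) (h' : x ≡ y [MOD M]) : red M x = y := by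
  have h : x % M = y % M := h'
  simp only [Finset.mem_Icc] at hy
  unfold red
  rcases eq_or_lt_of_le hy.2 with rfl | hlt
  · have : x % y = 0 := by rw [h, Nat.mod_self]
    simp [this]
  · have hyy : y % M = y := Nat.mod_eq_of_lt hlt
    rw [h, hyy]
    have : y ≠ 0 := by omega
    simp [this]

/-- `ρ_r(n)`: the number of `r`-tuples `(k_1,…,k_r) ∈ {1,…,n}^r`
with `gcd(k_1,…,k_r)` regular (mod `n`). -/
noncomputable def rhoR (r n : ℕ) : ℕ :=
  ((Fintype.piFinset fun _ : Fin r => Finset.Icc 1 n).filter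
    fun t => IsRegularMod (Finset.univ.gcd t) n).card

lemma rho_one (r : ℕ) : rhoR r 1 = 1 := by
  unfold rhoR
  rw [Finset.filter_true_of_mem (fun t _ => ⟨0, by simp⟩)]
  simp [Fintype.card_piFinset]

lemma rho_pp {r : ℕ} (hr : 1 ≤ r) {p ν : ℕ} (hp : p.Prime) (hν : 1 ≤ ν) :
    rhoR r (p ^ ν) = p ^ (r * ν) - p ^ (r * (ν - 1)) + 1 := by
  unfold rhoR
  set q := p ^ ν with hqdef
  have hq : 0 < q := pow_pos hp.pos ν
  have hpq : p ∣ q := dvd_pow_self p (by omega)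
  have key : ∀ t ∈ Fintype.piFinset (fun _ : Fin r => Finset.Icc 1 q),
      IsRegularMod (Finset.univ.gcd t) q ↔ ((¬ ∀ i, p ∣ t i) ∨ (∀ i, t i = q)) := by
    intro t ht
    simp only [Fintype.mem_piFinset, Finset.mem_Icc] at ht
    rw [isReg_prime_pow hp hν]
    constructor
    · rintro (h | h)
      · left
        intro hall
        exact h (Finset.dvd_gcd_iff.mpr fun i _ => hall i)
      · right
        intro i
        have h1 : q ∣ t i := h.trans (Finset.gcd_dvd (Finset.mem_univ i))
        have := (ht i).1
        have := (ht i).2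
        have := Nat.le_of_dvd (by omega) h1
        omega
    · rintro (h | h)
      · left
        intro hd
        exact h fun i => hd.trans (Finset.gcd_dvd (Finset.mem_univ i))
      · right
        exact Finset.dvd_gcd_iff.mpr fun i _ => (h i) ▸ dvd_refl q
  rw [Finset.filter_congr key, Finset.filter_or, Finset.card_union_of_disjoint]
  · have h1 : (Fintype.piFinset fun _ : Fin r => Finset.Icc 1 q).card = q ^ r := by
      simp [Fintype.card_piFinset]
    have h2 : ((Fintype.piFinset fun _ : Fin r => Finset.Icc 1 q).filter
        fun t => ∀ i, p ∣ t i).card = (p ^ (ν - 1)) ^ r := by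
      have heq : ((Fintype.piFinset fun _ : Fin r => Finset.Icc 1 q).filter
          fun t => ∀ i, p ∣ t i)
          = Fintype.piFinset (fun _ : Fin r => (Finset.Icc 1 q).filter fun x => p ∣ x) := by
        ext t
        simp only [Finset.mem_filter, Fintype.mem_piFinset, Finset.mem_Icc]
        exact ⟨fun h i => ⟨h.1 i, h.2 i⟩, fun h => ⟨fun i => (h i).1, fun i => (h i).2⟩⟩
      rw [heq, Fintype.card_piFinset]
      have hdiv : ((Finset.Icc 1 q).filter fun x => p ∣ x).card = p ^ (ν - 1) := by
        rw [show (1 : ℕ) = 0 + 1 from rfl, Finset.Icc_add_one_left_eq_Ioc,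
          Nat.Ioc_filter_dvd_card_eq_div]
        rw [hqdef]
        conv_lhs => rw [show ν = (ν - 1) + 1 by omega]
        rw [pow_succ, Nat.mul_div_cancel _ hp.pos]
      simp [hdiv]
    have h3 : ((Fintype.piFinset fun _ : Fin r => Finset.Icc 1 q).filter
        fun t => ∀ i, t i = q) = {fun _ => q} := by
      ext t
      simp only [Finset.mem_filter, Fintype.mem_piFinset, Finset.mem_Icc,
        Finset.mem_singleton]
      constructor
      · rintro ⟨-, h⟩
        exact funext h
      · rintro rfl
        exact ⟨fun i => ⟨hq, le_refl q⟩, fun i => rfl⟩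
    rw [Finset.filter_not, Finset.card_sdiff_of_subset (Finset.filter_subset _ _), h1, h2, h3,
      Finset.card_singleton, hqdef, ← pow_mul, ← pow_mul, mul_comm ν r, mul_comm (ν - 1) r]
  · rw [Finset.disjoint_left]
    intro t ht1 ht2
    rw [Finset.mem_filter] at ht1 ht2
    exact ht1.2 fun i => (ht2.2 i) ▸ hpq

lemma red_crt_left {m n : ℕ} (h : Nat.Coprime m n) (a b : ℕ) (ha : a ∈ Finset.Icc 1 m) :
    red m (red (m * n) ((Nat.chineseRemainder h a b : ℕ))) = a := by
  apply red_eq_of ha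
  have h1 : red (m * n) ((Nat.chineseRemainder h a b : ℕ))
      ≡ (Nat.chineseRemainder h a b : ℕ) [MOD m] :=
    Nat.ModEq.of_dvd (dvd_mul_right m n) (red_modEq (m * n) _)
  exact h1.trans (Nat.chineseRemainder h a b).prop.1

lemma red_crt_right {m n : ℕ} (h : Nat.Coprime m n) (a b : ℕ) (hb : b ∈ Finset.Icc 1 n) :
    red n (red (m * n) ((Nat.chineseRemainder h a b : ℕ))) = b := by
  apply red_eq_of hb
  have h1 : red (m * n) ((Nat.chineseRemainder h a b : ℕ))
      ≡ (Nat.chineseRemainder h a b : ℕ) [MOD n] :=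
    Nat.ModEq.of_dvd (dvd_mul_left n m) (red_modEq (m * n) _)
  exact h1.trans (Nat.chineseRemainder h a b).prop.2

lemma rho_mul (r : ℕ) {m n : ℕ} (hm : 0 < m) (hn : 0 < n) (h : Nat.Coprime m n) :
    rhoR r (m * n) = rhoR r m * rhoR r n := by
  unfold rhoR
  rw [← Finset.card_product]
  have hmn : 0 < m * n := Nat.mul_pos hm hn
  have split : ∀ t : Fin r → ℕ, IsRegularMod (Finset.univ.gcd t) (m * n) ↔
      IsRegularMod (Finset.univ.gcd fun i => red m (t i)) m ∧
      IsRegularMod (Finset.univ.gcd fun i => red n (t i)) n := fun t => by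
    rw [isReg_mul h,
      pred_congr hm t (fun i => red m (t i)) (fun i => ((red_modEq m (t i)).symm : _)),
      pred_congr hn t (fun i => red n (t i)) (fun i => ((red_modEq n (t i)).symm : _))]
  apply Finset.card_bij'
    (i := fun t _ => ((fun i => red m (t i)), (fun i => red n (t i))))
    (j := fun z _ => fun i => red (m * n) ((Nat.chineseRemainder h (z.1 i) (z.2 i) : ℕ)))
  · -- hi
    intro t ht
    rw [Finset.mem_filter] at ht
    obtain ⟨htmem, htP⟩ := ht
    rw [split] at htP
    rw [Finset.mem_product, Finset.mem_filter, Finset.mem_filter]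
    exact ⟨⟨Fintype.mem_piFinset.mpr fun i => red_mem hm _, htP.1⟩,
      ⟨Fintype.mem_piFinset.mpr fun i => red_mem hn _, htP.2⟩⟩
  · -- hj
    intro z hz
    rw [Finset.mem_product, Finset.mem_filter, Finset.mem_filter] at hz
    obtain ⟨⟨hz1mem, hz1P⟩, hz2mem, hz2P⟩ := hz
    rw [Fintype.mem_piFinset] at hz1mem hz2mem
    rw [Finset.mem_filter]
    refine ⟨Fintype.mem_piFinset.mpr fun i => red_mem hmn _, ?_⟩
    rw [split]
    constructor
    · have e1 : (fun i => red m (red (m * n)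
          ((Nat.chineseRemainder h (z.1 i) (z.2 i) : ℕ)))) = z.1 :=
        funext fun i => red_crt_left h _ _ (hz1mem i)
      rw [e1]
      exact hz1P
    · have e2 : (fun i => red n (red (m * n)
          ((Nat.chineseRemainder h (z.1 i) (z.2 i) : ℕ)))) = z.2 :=
        funext fun i => red_crt_right h _ _ (hz2mem i)
      rw [e2]
      exact hz2P
  · -- left_inv
    intro t ht
    rw [Finset.mem_filter] at ht
    have htmem := Fintype.mem_piFinset.mp ht.1
    funext i
    apply red_eq_of (htmem i)
    have h1 : t i ≡ (Nat.chineseRemainder h (red m (t i)) (red n (t i)) : ℕ) [MOD m * n] :=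
      Nat.chineseRemainder_modEq_unique h
        ((red_modEq m (t i)).symm) ((red_modEq n (t i)).symm)
    exact h1.symm
  · -- right_inv
    intro z hz
    rw [Finset.mem_product, Finset.mem_filter, Finset.mem_filter] at hz
    obtain ⟨⟨hz1mem, -⟩, hz2mem, -⟩ := hz
    rw [Fintype.mem_piFinset] at hz1mem hz2mem
    exact Prod.ext (funext fun i => red_crt_left h _ _ (hz1mem i))
      (funext fun i => red_crt_right h _ _ (hz2mem i))

theorem rhoR_multiplicative_and_prime_pow (r : ℕ) (hr : 1 ≤ r) :
    (rhoR r 1 = 1 ∧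
      ∀ m n : ℕ, Nat.Coprime m n → rhoR r (m * n) = rhoR r m * rhoR r n) ∧
    ∀ p ν : ℕ, p.Prime → 1 ≤ ν →
      rhoR r (p ^ ν) = p ^ (r * ν) - p ^ (r * (ν - 1)) + 1 := by
  refine ⟨⟨rho_one r, ?_⟩, fun p ν hp hν => rho_pp hr hp hν⟩
  intro m n hmn
  rcases Nat.eq_zero_or_pos m with rfl | hm
  · have hn1 : n = 1 := by simpa using hmn
    subst hn1
    simp [rho_one]
  rcases Nat.eq_zero_or_pos n with rfl | hn
  · have hm1 : m = 1 := by simpa using hmn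
    subst hm1
    simp [rho_one]
  exact rho_mul r hm hn hmn
end

section
/- Let s ≥ 0 be a fixed real number. Then uniformly for real x > 1 and n ∈ ℕ, Σ_{k ≤ x, k regular (mod n)} k^s = (x^{s+1}/(s+1)) · ρ(n)/n + O(x^s 3^{ω(n)}), where ω(n) is the number of distinct prime factors of n. -/
open Finset
open scoped Classical

/-- `Reg_n`, the set of `k ∈ {1,…,n}` that are regular (mod `n`). -/
noncomputable def Reg (n : ℕ) : Finset ℕ :=
  (Finset.Icc 1 n).filter fun k => IsRegularMod k n

open ArithmeticFunction
open scoped ArithmeticFunction.Moebius ArithmeticFunction.zeta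

noncomputable def U (n : ℕ) : Finset ℕ := n.divisors.filter fun d => Nat.Coprime d (n / d)

lemma regular_iff {k n : ℕ} (hk : 0 < k) (hn : 0 < n) :
    IsRegularMod k n ↔ Nat.Coprime (Nat.gcd k n) (n / Nat.gcd k n) := by
  set g := Nat.gcd k n with hg
  have hgk : g ∣ k := Nat.gcd_dvd_left k n
  have hgn : g ∣ n := Nat.gcd_dvd_right k n
  have hgpos : 0 < g := Nat.gcd_pos_of_pos_left n hk
  have hmul : g * (n / g) = n := Nat.mul_div_cancel' hgn
  constructor
  · rintro ⟨x, hx⟩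
    -- show gcd g (n/g) = 1
    rw [Nat.coprime_iff_gcd_eq_one]
    by_contra hne
    obtain ⟨p, hp, hpd⟩ := Nat.exists_prime_and_dvd hne
    have hpg : p ∣ g := hpd.trans (Nat.gcd_dvd_left _ _)
    have hpng : p ∣ n / g := hpd.trans (Nat.gcd_dvd_right _ _)
    have hpk : p ∣ k := hpg.trans hgk
    set e := n.factorization p with he
    have hpen : p ^ e ∣ n := Nat.ordProj_dvd n p
    -- p^e divides k*(k*x-1) in ℤ
    have hfac : (k : ℤ) ^ 2 * x - k = k * (k * x - 1) := by ring
    have hdvd : ((p : ℤ)) ^ e ∣ (k : ℤ) * (k * x - 1) := by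
      rw [← hfac]
      have := (Int.natCast_dvd_natCast.2 hpen).trans hx
      push_cast at this
      exact this
    have hcop : IsCoprime ((p : ℤ) ^ e) ((k : ℤ) * x - 1) := by
      apply IsCoprime.pow_left
      rw [Prime.coprime_iff_not_dvd (Nat.prime_iff_prime_int.mp hp)]
      intro hdd
      have h1 : (p : ℤ) ∣ (k : ℤ) * x := Dvd.dvd.mul_right (Int.natCast_dvd_natCast.2 hpk) x
      have h2 : (p : ℤ) ∣ 1 := by
        have := dvd_sub h1 hdd
        simpa using this
      exact hp.one_lt.ne' (by exact_mod_cast Int.eq_one_of_dvd_one (by positivity) h2)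
    have hpek : (p : ℤ) ^ e ∣ (k : ℤ) := hcop.dvd_of_dvd_mul_right hdvd
    have hpekn : p ^ e ∣ k := by exact_mod_cast hpek
    have hpeg : p ^ e ∣ g := Nat.dvd_gcd hpekn hpen
    have : p ^ (e + 1) ∣ n := by
      rw [← hmul, pow_succ]
      exact mul_dvd_mul hpeg hpng
    exact Nat.pow_succ_factorization_not_dvd hn.ne' hp this
  · intro hcop
    have hkng : Nat.Coprime k (n / g) := by
      have h1 : Nat.gcd k (n / g) ∣ g := Nat.dvd_gcd (Nat.gcd_dvd_left _ _) ((Nat.gcd_dvd_right _ _).trans (Nat.div_dvd_of_dvd hgn))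
      have h2 : Nat.gcd k (n / g) ∣ n / g := Nat.gcd_dvd_right _ _
      exact Nat.eq_one_of_dvd_coprimes hcop h1 h2
    obtain ⟨u, v, huv⟩ := (Nat.isCoprime_iff_coprime.2 hkng)
    refine ⟨u, ?_⟩
    have : (k : ℤ) ^ 2 * u - k = k * (k * u - 1) := by ring
    rw [this, ← hmul]
    push_cast
    apply mul_dvd_mul (Int.natCast_dvd_natCast.2 hgk)
    have : (k : ℤ) * u - 1 = -(v * (n / g : ℕ)) := by
      have : u * k + v * (n/g : ℕ) = 1 := huv
      linarith [this]
    rw [this]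
    exact (dvd_neg).2 (Dvd.dvd.mul_left dvd_rfl v)

lemma sum_dvd_bij (d J : ℕ) (hd : 0 < d) (p : ℕ → Prop) [DecidablePred p] (g : ℕ → ℝ) :
    ∑ k ∈ (Icc 1 J).filter (fun k => d ∣ k ∧ p k), g k
      = ∑ t ∈ (Icc 1 (J/d)).filter (fun t => p (d*t)), g (d*t) := by
  apply Finset.sum_nbij' (i := fun k => k / d) (j := fun t => d * t)
  · intro k hk
    simp only [mem_filter, mem_Icc] at hk ⊢
    obtain ⟨⟨hk1, hkJ⟩, hdk, hpk⟩ := hk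
    have hkd : d * (k / d) = k := Nat.mul_div_cancel' hdk
    refine ⟨⟨?_, Nat.div_le_div_right hkJ⟩, by rwa [hkd]⟩
    rw [Nat.one_le_div_iff hd]
    exact Nat.le_of_dvd hk1 hdk
  · intro t ht
    simp only [mem_filter, mem_Icc] at ht ⊢
    obtain ⟨⟨ht1, htJ⟩, hpt⟩ := ht
    refine ⟨⟨Nat.one_le_iff_ne_zero.2 (by positivity), ?_⟩, ⟨dvd_mul_right d t, hpt⟩⟩
    rw [mul_comm, ← Nat.le_div_iff_mul_le hd]
    exact htJ
  · intro k hk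
    simp only [mem_filter, mem_Icc] at hk
    exact Nat.mul_div_cancel' hk.2.1
  · intro t ht
    exact Nat.mul_div_cancel_left t hd
  · intro k hk
    simp only [mem_filter, mem_Icc] at hk
    rw [Nat.mul_div_cancel' hk.2.1]

lemma mu_sum_divisors (g : ℕ) : (∑ e ∈ g.divisors, (μ e : ℝ)) = if g = 1 then 1 else 0 := by
  have h2 : ((μ * ζ : ArithmeticFunction ℤ)) g = (1 : ArithmeticFunction ℤ) g := by
    rw [ArithmeticFunction.moebius_mul_coe_zeta]
  rw [ArithmeticFunction.coe_mul_zeta_apply, ArithmeticFunction.one_apply] at h2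
  have : ((∑ e ∈ g.divisors, (μ e : ℤ) : ℤ) : ℝ) = ((if g = 1 then (1:ℤ) else 0 : ℤ) : ℝ) := by
    exact_mod_cast congrArg (fun z : ℤ => (z : ℝ)) h2
  push_cast at this
  simpa using this

lemma sum_coprime (m J : ℕ) (hm : m ≠ 0) (g : ℕ → ℝ) :
    ∑ j ∈ (Icc 1 J).filter (fun j => Nat.Coprime j m), g j
      = ∑ e ∈ m.divisors, (μ e : ℝ) * ∑ t ∈ Icc 1 (J / e), g (e * t) := by
  rw [Finset.sum_filter]
  have key : ∀ j ∈ Icc 1 J, (if Nat.Coprime j m then g j else 0)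
      = ∑ e ∈ m.divisors, if e ∣ j then (μ e : ℝ) * g j else 0 := by
    intro j hj
    simp only [mem_Icc] at hj
    have hgcd : Nat.gcd j m ≠ 0 := fun h => hm (Nat.eq_zero_of_gcd_eq_zero_right h)
    have hdiv : m.divisors.filter (· ∣ j) = (Nat.gcd j m).divisors := by
      ext e
      simp only [Nat.mem_divisors, mem_filter, Nat.dvd_gcd_iff]
      tauto
    rw [← Finset.sum_filter, hdiv, ← Finset.sum_mul, mu_sum_divisors]
    by_cases h : Nat.gcd j m = 1 <;> simp [Nat.Coprime, h] at *
  rw [Finset.sum_congr rfl key, Finset.sum_comm]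
  apply Finset.sum_congr rfl
  intro e he
  have he1 : 0 < e := Nat.pos_of_mem_divisors he
  have hb := sum_dvd_bij e J he1 (fun _ => True) g
  simp only [and_true, Finset.filter_true] at hb
  rw [← hb, Finset.mul_sum, Finset.sum_filter]

lemma gcd_eq_iff_of_unitary {n d k : ℕ} (hn : 0 < n) (hk : 0 < k) (hd : d ∈ U n) :
    Nat.gcd k n = d ↔ d ∣ k ∧ Nat.Coprime (k / d) (n / d) := by
  simp only [U, mem_filter, Nat.mem_divisors] at hd
  obtain ⟨⟨hdn, _⟩, hcop⟩ := hd
  constructor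
  · rintro rfl
    exact ⟨Nat.gcd_dvd_left k n, Nat.coprime_div_gcd_div_gcd (Nat.gcd_pos_of_pos_left n hk)⟩
  · rintro ⟨hdk, hc⟩
    have hd0 : 0 < d := Nat.pos_of_dvd_of_pos hdk hk
    conv_lhs => rw [← Nat.mul_div_cancel' hdk, ← Nat.mul_div_cancel' hdn]
    rw [Nat.gcd_mul_left]
    rw [Nat.Coprime] at hc
    rw [hc, mul_one]

lemma sum_regular_eq (n : ℕ) (hn : 0 < n) (N : ℕ) (f : ℕ → ℝ) :
    ∑ k ∈ (Icc 1 N).filter (fun k => IsRegularMod k n), f k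
      = ∑ d ∈ U n, ∑ e ∈ (n / d).divisors, (μ e : ℝ) * ∑ t ∈ Icc 1 (N / (d * e)), f (d * (e * t)) := by
  have hmaps : ∀ k ∈ (Icc 1 N).filter (fun k => IsRegularMod k n), Nat.gcd k n ∈ U n := by
    intro k hk
    simp only [mem_filter, mem_Icc] at hk
    obtain ⟨⟨hk1, _⟩, hreg⟩ := hk
    simp only [U, mem_filter, Nat.mem_divisors]
    exact ⟨⟨Nat.gcd_dvd_right k n, hn.ne'⟩, (regular_iff hk1 hn).1 hreg⟩
  rw [← Finset.sum_fiberwise_of_maps_to hmaps f]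
  apply Finset.sum_congr rfl
  intro d hd
  have hdn : d ∣ n := (Finset.mem_filter.1 hd).1 |> Nat.mem_divisors.mp |>.1
  have hd0 : 0 < d := Nat.pos_of_mem_divisors (Finset.mem_filter.1 hd).1
  have hcopd : Nat.Coprime d (n / d) := (Finset.mem_filter.1 hd).2
  -- fiber = plain filter by gcd = d
  have hfib : ((Icc 1 N).filter (fun k => IsRegularMod k n)).filter (fun k => Nat.gcd k n = d)
      = (Icc 1 N).filter (fun k => d ∣ k ∧ Nat.Coprime (k / d) (n / d)) := by
    rw [Finset.filter_filter]
    apply Finset.filter_congr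
    intro k hk
    have hk1 : 0 < k := by simp only [mem_Icc] at hk; exact hk.1
    rw [← gcd_eq_iff_of_unitary hn hk1 hd]
    constructor
    · rintro ⟨_, h⟩; exact h
    · intro h
      refine ⟨(regular_iff hk1 hn).2 ?_, h⟩
      rw [h]; exact hcopd
  rw [hfib]
  have hb := sum_dvd_bij d N hd0 (fun k => Nat.Coprime (k / d) (n / d)) f
  refine hb.trans ?_
  have hfil2 : (Icc 1 (N / d)).filter (fun t => Nat.Coprime (d * t / d) (n / d))
      = (Icc 1 (N / d)).filter (fun t => Nat.Coprime t (n / d)) := by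
    apply Finset.filter_congr
    intro t _
    rw [Nat.mul_div_cancel_left t hd0]
  rw [hfil2]
  have hnd0 : n / d ≠ 0 := Nat.div_ne_zero_iff.2 ⟨hd0.ne', Nat.le_of_dvd hn hdn⟩
  refine (sum_coprime (n / d) (N / d) hnd0 (fun j => f (d * j))).trans ?_
  apply Finset.sum_congr rfl
  intro e _
  rw [Nat.div_div_eq_div_mul]

lemma unitary_eq_prod {n d : ℕ} (hn : 0 < n) (hd : d ∈ U n) :
    d = ∏ p ∈ d.primeFactors, p ^ n.factorization p := by
  simp only [U, mem_filter, Nat.mem_divisors] at hd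
  obtain ⟨⟨hdn, hn0⟩, hcop⟩ := hd
  have hd0 : d ≠ 0 := by
    rintro rfl
    exact hn0 (Nat.eq_zero_of_zero_dvd hdn)
  have hnd0 : n / d ≠ 0 :=
    Nat.div_ne_zero_iff.2 ⟨hd0, Nat.le_of_dvd hn hdn⟩
  have hkey : ∀ p ∈ d.primeFactors, n.factorization p = d.factorization p := by
    intro p hp
    have hmul : d * (n / d) = n := Nat.mul_div_cancel' hdn
    have hfac : n.factorization = d.factorization + (n / d).factorization := by
      conv_lhs => rw [← hmul]
      rw [Nat.factorization_mul hd0 hnd0]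
    have hdisj := Nat.Coprime.disjoint_primeFactors hcop
    have hzero : (n / d).factorization p = 0 := by
      have : p ∉ (n / d).primeFactors := Finset.disjoint_left.1 hdisj hp
      rw [← Nat.support_factorization, Finsupp.notMem_support_iff] at this
      exact this
    rw [hfac]
    simp [hzero]
  conv_lhs => rw [← Nat.factorization_prod_pow_eq_self hd0]
  rw [Finsupp.prod]
  rw [Nat.support_factorization]
  exact Finset.prod_congr rfl (fun p hp => by rw [hkey p hp])

lemma sum_abs_mu_le (m : ℕ) (hm : m ≠ 0) :
    ∑ e ∈ m.divisors, |(μ e : ℝ)| ≤ 2 ^ m.primeFactors.card := by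
  have h1 : ∀ e ∈ m.divisors, |(μ e : ℝ)| = if Squarefree e then 1 else 0 := by
    intro e _
    by_cases h : Squarefree e
    · rw [if_pos h, ArithmeticFunction.moebius_apply_of_squarefree h]
      push_cast
      rw [abs_neg_one_pow]
    · rw [if_neg h, ArithmeticFunction.moebius_eq_zero_of_not_squarefree h]
      simp
  rw [Finset.sum_congr rfl h1, Finset.sum_boole]
  have hcard : (m.divisors.filter Squarefree).card ≤ 2 ^ m.primeFactors.card := by
    have h2 := Finset.card_le_card_of_injOn (f := Nat.primeFactors)
      (s := m.divisors.filter Squarefree) (t := m.primeFactors.powerset)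
      (by
        intro e he
        simp only [Finset.coe_filter, Set.mem_setOf_eq, Nat.mem_divisors] at he
        exact Finset.mem_powerset.2 (Nat.primeFactors_mono he.1.1 hm))
      (by
        intro e1 h1' e2 h2' hpf
        simp only [Finset.coe_filter, Set.mem_setOf_eq, Nat.mem_divisors] at h1' h2'
        rw [← Nat.prod_primeFactors_of_squarefree h1'.2, ← Nat.prod_primeFactors_of_squarefree h2'.2, hpf])
    rwa [Finset.card_powerset] at h2
  calc ((m.divisors.filter Squarefree).card : ℝ)
      ≤ ((2 ^ m.primeFactors.card : ℕ) : ℝ) := by exact_mod_cast hcard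
    _ = 2 ^ m.primeFactors.card := by push_cast; ring

lemma sum_unitary_le (n : ℕ) (hn : 0 < n) :
    ∑ d ∈ U n, (2:ℝ) ^ (n / d).primeFactors.card ≤ 3 ^ n.primeFactors.card := by
  have hmem : ∀ d ∈ U n, d ∣ n ∧ d ≠ 0 ∧ n / d ≠ 0 ∧ Nat.Coprime d (n / d) := by
    intro d hd
    simp only [U, mem_filter, Nat.mem_divisors] at hd
    obtain ⟨⟨hdn, hn0⟩, hcop⟩ := hd
    have hd0 : d ≠ 0 := by rintro rfl; exact hn0 (Nat.eq_zero_of_zero_dvd hdn)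
    exact ⟨hdn, hd0, Nat.div_ne_zero_iff.2 ⟨hd0, Nat.le_of_dvd hn hdn⟩, hcop⟩
  have key : ∀ d ∈ U n, (n / d).primeFactors = n.primeFactors \ d.primeFactors := by
    intro d hd
    obtain ⟨hdn, hd0, hnd0, hcop⟩ := hmem d hd
    have hmul : d * (n / d) = n := Nat.mul_div_cancel' hdn
    have hun := Nat.primeFactors_mul hd0 hnd0
    rw [hmul] at hun
    rw [hun, Finset.union_sdiff_cancel_left (Nat.Coprime.disjoint_primeFactors hcop)]
  calc ∑ d ∈ U n, (2:ℝ) ^ (n / d).primeFactors.card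
      = ∑ d ∈ U n, (2:ℝ) ^ (n.primeFactors \ d.primeFactors).card := by
        exact Finset.sum_congr rfl (fun d hd => by rw [key d hd])
    _ = ∑ S ∈ (U n).image Nat.primeFactors, (2:ℝ) ^ (n.primeFactors \ S).card := by
        rw [Finset.sum_image]
        intro d1 h1 d2 h2 hpf
        rw [unitary_eq_prod hn h1, unitary_eq_prod hn h2, hpf]
    _ ≤ ∑ S ∈ n.primeFactors.powerset, (2:ℝ) ^ (n.primeFactors \ S).card := by
        apply Finset.sum_le_sum_of_subset_of_nonneg
        · intro S hS
          simp only [Finset.mem_image] at hS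
          obtain ⟨d, hd, rfl⟩ := hS
          exact Finset.mem_powerset.2 (Nat.primeFactors_mono (hmem d hd).1 hn.ne')
        · intro S _ _
          positivity
    _ = 3 ^ n.primeFactors.card := by
        have := Finset.prod_add (fun _ : ℕ => (1:ℝ)) (fun _ : ℕ => (2:ℝ)) n.primeFactors
        simp only [Finset.prod_const_one, one_mul, Finset.prod_const] at this
        norm_num at this
        exact this.symm

lemma rpow_mvt {s a b : ℝ} (hs : 0 ≤ s) (ha : 0 ≤ a) (hab : a ≤ b) :
    (s+1) * a^s * (b-a) ≤ b^(s+1) - a^(s+1) ∧ b^(s+1) - a^(s+1) ≤ (s+1) * b^s * (b-a) := by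
  rcases eq_or_lt_of_le hab with rfl | hlt
  · simp
  have hb : 0 < b := lt_of_le_of_lt ha hlt
  have hcont : ContinuousOn (fun t : ℝ => t ^ (s+1)) (Set.Icc a b) := by
    intro t _
    exact (Real.continuousAt_rpow_const t (s+1) (Or.inr (by linarith))).continuousWithinAt
  have hderiv : ∀ t ∈ Set.Ioo a b, HasDerivAt (fun t : ℝ => t ^ (s+1)) ((s+1) * t ^ s) t := by
    intro t ht
    have ht0 : t ≠ 0 := by
      have h := ha.trans_lt ht.1
      exact h.ne'
    have h := Real.hasDerivAt_rpow_const (x := t) (p := s+1) (Or.inl ht0)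
    simpa using h
  obtain ⟨c, hc, hceq⟩ := exists_hasDerivAt_eq_slope (fun t : ℝ => t ^ (s+1))
    (fun t => (s+1) * t ^ s) hlt hcont hderiv
  have hc0 : 0 ≤ c := le_of_lt (lt_of_le_of_lt ha hc.1)
  have hlow : a ^ s ≤ c ^ s := Real.rpow_le_rpow ha hc.1.le hs
  have hhigh : c ^ s ≤ b ^ s := Real.rpow_le_rpow hc0 hc.2.le hs
  have hba : 0 < b - a := by linarith
  have heq : b ^ (s+1) - a ^ (s+1) = (s+1) * c ^ s * (b - a) := by
    rw [hceq, div_mul_cancel₀ _ hba.ne']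
  constructor
  · rw [heq]
    have h2 : (s+1) * a^s ≤ (s+1) * c^s := by nlinarith
    nlinarith
  · rw [heq]
    have h2 : (s+1) * c^s ≤ (s+1) * b^s := by nlinarith
    nlinarith

lemma sum_rpow_bounds {s : ℝ} (hs : 0 ≤ s) (M : ℕ) :
    (M:ℝ)^(s+1)/(s+1) ≤ ∑ t ∈ Icc 1 M, (t:ℝ)^s ∧
      ∑ t ∈ Icc 1 M, (t:ℝ)^s ≤ (M:ℝ)^(s+1)/(s+1) + (M:ℝ)^s := by
  have hs1 : (0:ℝ) < s + 1 := by linarith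
  induction M with
  | zero =>
    simp [Real.zero_rpow hs1.ne']
    positivity
  | succ M ih =>
    have hM : (0:ℝ) ≤ M := Nat.cast_nonneg M
    have hM1 : (M:ℝ) ≤ (M:ℝ) + 1 := by linarith
    obtain ⟨hmvt1, hmvt2⟩ := rpow_mvt hs hM hM1
    simp only [add_sub_cancel_left, mul_one] at hmvt1 hmvt2
    have hsum : ∑ t ∈ Icc 1 (M+1), (t:ℝ)^s = (∑ t ∈ Icc 1 M, (t:ℝ)^s) + ((M:ℝ)+1)^s := by
      rw [Finset.sum_Icc_succ_top (by omega)]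
      push_cast
      ring
    have hcast : ((M+1:ℕ):ℝ) = (M:ℝ)+1 := by push_cast; ring
    rw [hsum, hcast]
    have hMs : (M:ℝ)^s ≤ ((M:ℝ)+1)^s := Real.rpow_le_rpow hM hM1 hs
    have hdiv1 : (((M:ℝ)+1)^(s+1) - (M:ℝ)^(s+1))/(s+1) ≤ ((M:ℝ)+1)^s := by
      rw [div_le_iff₀ hs1]; linarith
    have hdiv2 : (M:ℝ)^s ≤ (((M:ℝ)+1)^(s+1) - (M:ℝ)^(s+1))/(s+1) := by
      rw [le_div_iff₀ hs1]; linarith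
    have hsplit : (((M:ℝ)+1)^(s+1) - (M:ℝ)^(s+1))/(s+1)
        = ((M:ℝ)+1)^(s+1)/(s+1) - (M:ℝ)^(s+1)/(s+1) := by ring
    rw [hsplit] at hdiv1 hdiv2
    constructor
    · linarith [ih.1]
    · linarith [ih.2]

lemma floor_sum_rpow_est {s : ℝ} (hs : 0 ≤ s) {y : ℝ} (hy : 0 < y) :
    |(∑ t ∈ Icc 1 ⌊y⌋₊, (t:ℝ)^s) - y^(s+1)/(s+1)| ≤ 2 * y^s := by
  have hs1 : (0:ℝ) < s + 1 := by linarith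
  have hys : (0:ℝ) ≤ y^s := Real.rpow_nonneg hy.le s
  by_cases h1 : y < 1
  · have hfl : ⌊y⌋₊ = 0 := Nat.floor_eq_zero.2 h1
    rw [hfl]
    have hemp : (Icc 1 0 : Finset ℕ) = ∅ := by simp
    rw [hemp, Finset.sum_empty, zero_sub, abs_neg, abs_of_nonneg (by positivity)]
    have hy1 : y^(s+1) = y^s * y := Real.rpow_add_one hy.ne' s
    have : y^(s+1)/(s+1) ≤ y^(s+1) := div_le_self (by positivity) (by linarith)
    have : y^(s+1) ≤ y^s := by
      rw [hy1]
      nlinarith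
    linarith [div_le_self (Real.rpow_nonneg hy.le (s+1)) (by linarith : (1:ℝ) ≤ s+1)]
  · push_neg at h1
    set M := ⌊y⌋₊ with hM
    have hfl1 : 1 ≤ M := Nat.le_floor (by exact_mod_cast h1)
    have hMy : (M:ℝ) ≤ y := Nat.floor_le hy.le
    have hyM : y < (M:ℝ) + 1 := Nat.lt_floor_add_one y
    obtain ⟨hl, hu⟩ := sum_rpow_bounds hs M
    have hMnn : (0:ℝ) ≤ M := Nat.cast_nonneg M
    obtain ⟨hmvt1, hmvt2⟩ := rpow_mvt hs hMnn hMy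
    have hMs : (M:ℝ)^s ≤ y^s := Real.rpow_le_rpow hMnn hMy hs
    have hMsnn : (0:ℝ) ≤ (M:ℝ)^s := Real.rpow_nonneg hMnn s
    rw [abs_le]
    constructor
    · have hprod : (s+1) * y^s * (y - (M:ℝ)) ≤ (s+1) * y^s * 1 :=
        mul_le_mul_of_nonneg_left (by linarith) (by positivity)
      have hA : y^(s+1) - (M:ℝ)^(s+1) ≤ (s+1) * y^s := by nlinarith
      have hB : (y^(s+1) - (M:ℝ)^(s+1))/(s+1) ≤ y^s := by
        rw [div_le_iff₀ hs1]
        linarith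
      rw [sub_div] at hB
      linarith
    · have hprod : 0 ≤ (s+1) * (M:ℝ)^s * (y - (M:ℝ)) :=
        mul_nonneg (mul_nonneg hs1.le hMsnn) (by linarith)
      have hMy1 : (M:ℝ)^(s+1) ≤ y^(s+1) := by nlinarith
      have hC : (M:ℝ)^(s+1)/(s+1) ≤ y^(s+1)/(s+1) := by gcongr
      linarith

lemma card_reg_eq (n : ℕ) (hn0 : 0 < n) :
    (((Reg n).card : ℝ)) = ∑ d ∈ U n, ∑ e ∈ (n/d).divisors,
      (μ e : ℝ) * ((n / (d*e) : ℕ) : ℝ) := by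
  have h := sum_regular_eq n hn0 n (fun _ => (1:ℝ))
  rw [Reg]
  have hL : ∑ k ∈ (Icc 1 n).filter (fun k => IsRegularMod k n), (1:ℝ)
      = (((Icc 1 n).filter fun k => IsRegularMod k n).card : ℝ) := by
    rw [Finset.sum_const, nsmul_eq_mul, mul_one]
  rw [← hL, h]
  apply Finset.sum_congr rfl
  intro d _
  apply Finset.sum_congr rfl
  intro e _
  congr 1
  rw [Finset.sum_const, nsmul_eq_mul, mul_one, Nat.card_Icc]
  simp

lemma pair_bound {s : ℝ} (hs : 0 ≤ s) {x : ℝ} (hx : 1 < x) {c : ℕ} (hc : 0 < c) :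
    |(∑ t ∈ Icc 1 (⌊x⌋₊ / c), ((c : ℝ) * t)^s) - x^(s+1)/((s+1) * c)| ≤ 2 * x^s := by
  have hx0 : (0:ℝ) < x := lt_trans one_pos hx
  have hc0 : (0:ℝ) < c := by exact_mod_cast hc
  have hs1 : (0:ℝ) < s + 1 := by linarith
  set y := x / c with hy
  have hy0 : 0 < y := div_pos hx0 hc0
  have hcy : (c:ℝ) * y = x := by rw [hy]; field_simp
  have hfloor : ⌊x⌋₊ / c = ⌊y⌋₊ := (Nat.floor_div_natCast x c).symm
  have hcs : (0:ℝ) < (c:ℝ)^s := Real.rpow_pos_of_pos hc0 s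
  have hterm : ∀ t : ℕ, ((c:ℝ) * t)^s = (c:ℝ)^s * (t:ℝ)^s := fun t =>
    Real.mul_rpow hc0.le (Nat.cast_nonneg t)
  have hsum : ∑ t ∈ Icc 1 (⌊x⌋₊ / c), ((c:ℝ) * t)^s
      = (c:ℝ)^s * ∑ t ∈ Icc 1 ⌊y⌋₊, (t:ℝ)^s := by
    rw [hfloor, Finset.mul_sum]
    exact Finset.sum_congr rfl (fun t _ => hterm t)
  have hmain : (c:ℝ)^s * (y^(s+1)/(s+1)) = x^(s+1)/((s+1) * c) := by
    have h1 : y^(s+1) = x^(s+1) / (c:ℝ)^(s+1) := Real.div_rpow hx0.le hc0.le (s+1)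
    have h2 : (c:ℝ)^(s+1) = (c:ℝ)^s * c := Real.rpow_add_one hc0.ne' s
    rw [h1, h2]
    field_simp
  have hE := floor_sum_rpow_est hs hy0
  have hxs : x^s = (c:ℝ)^s * y^s := by
    rw [← Real.mul_rpow hc0.le hy0.le, hcy]
  rw [hsum, ← hmain, ← mul_sub, abs_mul, abs_of_pos hcs, hxs]
  calc (c:ℝ)^s * |(∑ t ∈ Icc 1 ⌊y⌋₊, (t:ℝ)^s) - y^(s+1)/(s+1)|
      ≤ (c:ℝ)^s * (2 * y^s) := by
        exact mul_le_mul_of_nonneg_left hE hcs.le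
    _ = 2 * ((c:ℝ)^s * y^s) := by ring

lemma U_facts {n d : ℕ} (hn : 0 < n) (hd : d ∈ U n) :
    d ∣ n ∧ 0 < d ∧ 0 < n / d := by
  simp only [U, mem_filter, Nat.mem_divisors] at hd
  obtain ⟨⟨hdn, _⟩, _⟩ := hd
  have hd0 : 0 < d := Nat.pos_of_dvd_of_pos hdn hn
  exact ⟨hdn, hd0, Nat.div_pos (Nat.le_of_dvd hn hdn) hd0⟩

theorem sum_pow_reg_asymptotic (s : ℝ) (hs : 0 ≤ s) :
    ∃ C : ℝ, 0 < C ∧ ∀ x : ℝ, 1 < x → ∀ n : ℕ, 1 ≤ n →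
      |(∑ k ∈ (Finset.Icc 1 ⌊x⌋₊).filter fun k => IsRegularMod k n, (k : ℝ) ^ s) -
          x ^ (s + 1) / (s + 1) * (((Reg n).card : ℝ) / n)|
        ≤ C * x ^ s * 3 ^ n.primeFactors.card := by
  refine ⟨2, two_pos, ?_⟩
  intro x hx n hn
  have hn0 : 0 < n := hn
  have hx0 : (0:ℝ) < x := lt_trans one_pos hx
  have hxs : (0:ℝ) ≤ x^s := Real.rpow_nonneg hx0.le s
  have hs1 : (0:ℝ) < s + 1 := by linarith
  rw [sum_regular_eq n hn0 ⌊x⌋₊ (fun k => (k:ℝ)^s)]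
  have hmain : x^(s+1)/(s+1) * (((Reg n).card : ℝ)/n)
      = ∑ d ∈ U n, ∑ e ∈ (n/d).divisors,
          (μ e : ℝ) * (x^(s+1)/((s+1) * ((d*e : ℕ):ℝ))) := by
    rw [card_reg_eq n hn0, Finset.sum_div, Finset.mul_sum]
    refine Finset.sum_congr rfl fun d hd => ?_
    rw [Finset.sum_div, Finset.mul_sum]
    refine Finset.sum_congr rfl fun e he => ?_
    obtain ⟨hdn, hd0, hnd0⟩ := U_facts hn0 hd
    have hedvd : e ∣ n / d := (Nat.mem_divisors.1 he).1
    have he0 : 0 < e := Nat.pos_of_mem_divisors he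
    have hde : d * e ∣ n := (Nat.dvd_div_iff_mul_dvd hdn).1 hedvd
    have hde0 : ((d*e : ℕ):ℝ) ≠ 0 := by positivity
    have hcast : ((n/(d*e) : ℕ):ℝ) = (n:ℝ)/((d*e:ℕ):ℝ) := Nat.cast_div hde hde0
    rw [hcast]
    have hnne : (n:ℝ) ≠ 0 := by positivity
    field_simp
  rw [hmain, ← Finset.sum_sub_distrib]
  calc |∑ d ∈ U n, ((∑ e ∈ (n/d).divisors, (μ e:ℝ) * ∑ t ∈ Icc 1 (⌊x⌋₊/(d*e)), ((d*(e*t) : ℕ):ℝ)^s)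
        - ∑ e ∈ (n/d).divisors, (μ e:ℝ) * (x^(s+1)/((s+1) * ((d*e : ℕ):ℝ))))|
      ≤ ∑ d ∈ U n, |(∑ e ∈ (n/d).divisors, (μ e:ℝ) * ∑ t ∈ Icc 1 (⌊x⌋₊/(d*e)), ((d*(e*t) : ℕ):ℝ)^s)
        - ∑ e ∈ (n/d).divisors, (μ e:ℝ) * (x^(s+1)/((s+1) * ((d*e : ℕ):ℝ)))| :=
        Finset.abs_sum_le_sum_abs _ _
    _ ≤ ∑ d ∈ U n, (2 * x^s) * 2 ^ (n/d).primeFactors.card := by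
        apply Finset.sum_le_sum
        intro d hd
        obtain ⟨hdn, hd0, hnd0⟩ := U_facts hn0 hd
        rw [← Finset.sum_sub_distrib]
        refine (Finset.abs_sum_le_sum_abs _ _).trans ?_
        have hstep : ∀ e ∈ (n/d).divisors,
            |(μ e:ℝ) * ∑ t ∈ Icc 1 (⌊x⌋₊/(d*e)), ((d*(e*t) : ℕ):ℝ)^s
              - (μ e:ℝ) * (x^(s+1)/((s+1) * ((d*e : ℕ):ℝ)))| ≤ |(μ e:ℝ)| * (2 * x^s) := by
          intro e he
          have he0 : 0 < e := Nat.pos_of_mem_divisors he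
          have hde0 : 0 < d * e := Nat.mul_pos hd0 he0
          have hsum_eq : ∑ t ∈ Icc 1 (⌊x⌋₊/(d*e)), ((d*(e*t) : ℕ):ℝ)^s
              = ∑ t ∈ Icc 1 (⌊x⌋₊/(d*e)), (((d*e : ℕ):ℝ) * t)^s := by
            refine Finset.sum_congr rfl fun t _ => ?_
            congr 1
            push_cast
            ring
          rw [hsum_eq, ← mul_sub, abs_mul]
          exact mul_le_mul_of_nonneg_left (pair_bound hs hx hde0) (abs_nonneg _)
        refine (Finset.sum_le_sum hstep).trans ?_
        rw [← Finset.sum_mul]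
        rw [mul_comm]
        exact mul_le_mul_of_nonneg_left (sum_abs_mu_le (n/d) hnd0.ne') (by positivity)
    _ = (2 * x^s) * ∑ d ∈ U n, (2:ℝ) ^ (n/d).primeFactors.card := by rw [Finset.mul_sum]
    _ ≤ (2 * x^s) * 3 ^ n.primeFactors.card := by
        exact mul_le_mul_of_nonneg_left (sum_unitary_le n hn0) (by positivity)
    _ = 2 * x^s * 3 ^ n.primeFactors.card := by ring
end
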